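/- Let n ≥ 3 be an integer and p a prime with p ≡ 1 (mod n), and set m = (p−1)/n. Then (p−1)!/(m!)^n ≡ −Γ_p(1/n)^n (mod p), where Γ_p is the p-adic Gamma function. -/

import Mathlib

open Finset

/-- `Γ_p(n) = (−1)^n ∏_{1 ≤ k < n, p ∤ k} k` on the natural numbers. -/
def gammaPNat (p n : ℕ) : ℤ :=
  (-1) ^ n * ∏ k ∈ (Finset.Ico 1 n).filter (fun k => ¬ p ∣ k), (k : ℤ)

lemma block_prod (p : ℕ) [Fact p.Prime] (a : ℕ) :
    (∏ k ∈ Ico a (a + p), (if ¬ p ∣ k then (k : ZMod p) else 1)) = -1 := by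
  have hp : 0 < p := (Fact.out : p.Prime).pos
  induction a with
  | zero =>
    rw [Finset.prod_eq_prod_Ico_succ_bot (by omega)]
    rw [if_neg (by simp)]
    rw [one_mul, show 0 + p = p by omega]
    rw [← ZMod.prod_Ico_one_prime p]
    refine Finset.prod_congr rfl fun k hk => ?_
    rw [mem_Ico] at hk
    rw [if_pos]
    intro hd
    exact absurd (Nat.le_of_dvd (by omega) hd) (by omega)
  | succ a ih =>
    rw [show a + 1 + p = (a + p) + 1 by omega, Finset.prod_Ico_succ_top (by omega)]
    rw [Finset.prod_eq_prod_Ico_succ_bot (show a < a + p by omega)] at ih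
    have hfeq : (if ¬ p ∣ (a + p) then ((a + p : ℕ) : ZMod p) else 1)
        = (if ¬ p ∣ a then ((a : ℕ) : ZMod p) else 1) := by
      by_cases h : p ∣ a
      · rw [if_neg (by simpa using Nat.dvd_add_self_right.mpr h),
          if_neg (by simpa using h)]
      · rw [if_pos (by simpa using fun hc => h (Nat.dvd_add_self_right.mp hc)),
          if_pos (by simpa using h)]
        push_cast [ZMod.natCast_self]
        ring
    rw [hfeq, mul_comm]
    exact ih

lemma gamma_cast (p : ℕ) [Fact p.Prime] (x : ℕ) :
    ((gammaPNat p x : ℤ) : ZMod p)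
      = (-1) ^ x * ∏ k ∈ Ico 1 x, (if ¬ p ∣ k then (k : ZMod p) else 1) := by
  rw [gammaPNat, Finset.prod_filter]
  push_cast
  rfl

lemma gamma_period (p : ℕ) [Fact p.Prime] (hp2 : p ≠ 2) (a : ℕ) (ha : 1 ≤ a) :
    ((gammaPNat p (a + p) : ℤ) : ZMod p) = ((gammaPNat p a : ℤ) : ZMod p) := by
  rw [gamma_cast, gamma_cast]
  rw [← Finset.prod_Ico_consecutive _ ha (Nat.le_add_right a p)]
  rw [block_prod]
  have hodd : Odd p := (Fact.out : p.Prime).odd_of_ne_two hp2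
  rw [pow_add, hodd.neg_one_pow]
  ring

lemma gamma_mod_congr (p : ℕ) [Fact p.Prime] (hp2 : p ≠ 2) (t a : ℕ) (ha : 1 ≤ a) :
    ((gammaPNat p (a + t * p) : ℤ) : ZMod p) = ((gammaPNat p a : ℤ) : ZMod p) := by
  induction t with
  | zero => simp
  | succ t ih =>
    rw [show a + (t + 1) * p = (a + t * p) + p by ring,
      gamma_period p hp2 _ (by omega), ih]

lemma gamma_le_p (p : ℕ) [Fact p.Prime] (N : ℕ) (h1 : 1 ≤ N) (h2 : N ≤ p) :
    gammaPNat p N = (-1) ^ N * ((N - 1).factorial : ℤ) := by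
  rw [gammaPNat]
  congr 1
  rw [Finset.filter_true_of_mem (fun k hk => ?_)]
  · rw [← Finset.prod_Ico_id_eq_factorial (N - 1), Nat.cast_prod,
      show N - 1 + 1 = N by omega]
  · rw [mem_Ico] at hk
    intro hd
    exact absurd (Nat.le_of_dvd (by omega) hd) (by omega)

lemma key_zmod (p n m : ℕ) [Fact p.Prime] (hp2 : p ≠ 2) (hn : 3 ≤ n)
    (hm : p - 1 = m * n) (hm1 : 1 ≤ m) :
    ((((p - 1).factorial : ℤ) + gammaPNat p (p - m) ^ n * (m.factorial : ℤ) ^ n : ℤ)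
      : ZMod p) = 0 := by
  have hp : 2 ≤ p := (Fact.out : p.Prime).two_le
  have hmp : m < p := by nlinarith [Nat.sub_add_cancel (show 1 ≤ p by omega)]
  set N := p - m with hN
  have hN1 : 1 ≤ N := by omega
  have hNp : N ≤ p := by omega
  have hNm : N + m = p := by omega
  -- factorial cast as products
  have hfac : ∀ a : ℕ, ((a.factorial : ℕ) : ZMod p) = ∏ k ∈ Ico 1 (a + 1), (k : ZMod p) := by
    intro a
    rw [← Finset.prod_Ico_id_eq_factorial a, Nat.cast_prod]
  -- split (p-1)!
  have hsplit : (((p - 1).factorial : ℕ) : ZMod p)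
      = (((N - 1).factorial : ℕ) : ZMod p) * ∏ k ∈ Ico N p, (k : ZMod p) := by
    rw [hfac, hfac, show p - 1 + 1 = p by omega, show N - 1 + 1 = N by omega]
    rw [Finset.prod_Ico_consecutive _ hN1 hNp]
  -- reflect
  have hrefl : (∏ k ∈ Ico N p, (k : ZMod p)) = (-1) ^ m * ((m.factorial : ℕ) : ZMod p) := by
    have := Finset.prod_Ico_reflect (fun j => (j : ZMod p)) 1
      (show m + 1 ≤ p + 1 by omega)
    rw [show p + 1 - (m + 1) = N by omega, show p + 1 - 1 = p by omega] at this
    rw [← this]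
    have : ∀ j ∈ Ico 1 (m + 1), ((p - j : ℕ) : ZMod p) = (-1) * (j : ZMod p) := by
      intro j hj
      rw [mem_Ico] at hj
      push_cast [Nat.cast_sub (show j ≤ p by omega), ZMod.natCast_self]
      ring
    rw [Finset.prod_congr rfl this, Finset.prod_mul_distrib, Finset.prod_const,
      Nat.card_Ico, show m + 1 - 1 = m by omega, hfac]
  have hodd : Odd p := (Fact.out : p.Prime).odd_of_ne_two hp2
  have hunit : ((-1 : ZMod p) ^ N * (((N - 1).factorial : ℕ) : ZMod p)
      * ((m.factorial : ℕ) : ZMod p)) = 1 := by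
    have hw : (((p - 1).factorial : ℕ) : ZMod p) = -1 := ZMod.wilsons_lemma p
    rw [hsplit, hrefl] at hw
    have hsq : ((-1 : ZMod p) ^ m) * ((-1 : ZMod p) ^ m) = 1 := by
      rw [← pow_add]; exact Even.neg_one_pow ⟨m, rfl⟩
    have h2 : (((N - 1).factorial : ℕ) : ZMod p) * ((m.factorial : ℕ) : ZMod p)
        = -(-1 : ZMod p) ^ m := by
      linear_combination (-1 : ZMod p) ^ m * hw
        - ((((N - 1).factorial : ℕ) : ZMod p) * ((m.factorial : ℕ) : ZMod p)) * hsq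
    rw [mul_assoc, h2]
    have : (-1 : ZMod p) ^ N * -(-1) ^ m = -(-1) ^ (N + m) := by rw [pow_add]; ring
    rw [this, hNm, hodd.neg_one_pow]
    ring
  -- now conclude
  push_cast [gamma_le_p p N hN1 hNp, ZMod.wilsons_lemma]
  have : ((-1 : ZMod p) ^ N * (((N - 1).factorial : ℕ) : ZMod p)) ^ n
      * ((m.factorial : ℕ) : ZMod p) ^ n = 1 := by
    rw [← mul_pow, hunit, one_pow]
  push_cast at this
  linear_combination this

lemma gamma_approx (n p m : ℕ) [Fact p.Prime] (hp2 : p ≠ 2)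
    (hn : 3 ≤ n) (hm : p - 1 = m * n) (hm1 : 1 ≤ m)
    (Γ : ℚ_[p] → ℚ_[p])
    (hΓcont : ContinuousOn Γ {y : ℚ_[p] | ‖y‖ ≤ 1})
    (hΓnat : ∀ k : ℕ, Γ (k : ℚ_[p]) = (gammaPNat p k : ℚ_[p])) :
    ‖Γ ((n : ℚ_[p])⁻¹) - ((gammaPNat p (p - m) : ℤ) : ℚ_[p])‖ ≤ (p : ℝ) ^ (-1 : ℤ) := by
  have hp2le : 2 ≤ p := (Fact.out : p.Prime).two_le
  have hmp : m < p := by nlinarith [Nat.sub_add_cancel (show 1 ≤ p by omega)]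
  have hpn : ¬ p ∣ n := by
    intro hd
    have : p ∣ p - 1 := hm ▸ hd.mul_left m
    exact absurd (Nat.le_of_dvd (by omega) this) (by omega)
  have hpR : (1 : ℝ) < p := by exact_mod_cast hp2le
  have hε : (0 : ℝ) < (p : ℝ) ^ (-1 : ℤ) := by positivity
  set x₀ : ℚ_[p] := (n : ℚ_[p])⁻¹ with hx₀
  have hnnorm : ‖(n : ℚ_[p])‖ = 1 := by
    have h1 : ‖((n : ℤ) : ℚ_[p])‖ ≤ 1 := Padic.norm_int_le_one _
    have h2 : ¬ ‖((n : ℤ) : ℚ_[p])‖ < 1 := fun hc =>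
      hpn (Int.natCast_dvd_natCast.mp (Padic.norm_intCast_lt_one_iff.mp hc))
    push_cast at h1 h2
    linarith
  have hx₀norm : ‖x₀‖ = 1 := by rw [hx₀, norm_inv, hnnorm]; norm_num
  have hx₀mem : x₀ ∈ {y : ℚ_[p] | ‖y‖ ≤ 1} := le_of_eq hx₀norm
  obtain ⟨δ, hδpos, hball⟩ :=
    (Metric.continuousWithinAt_iff).mp (hΓcont x₀ hx₀mem) _ hε
  -- choose j
  obtain ⟨j₀, hj₀⟩ := exists_pow_lt_of_lt_one hδpos
    (show (p : ℝ)⁻¹ < 1 by rw [inv_lt_one_iff₀]; right; exact hpR)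
  set j := j₀ + 1 with hj
  have hjlt : (p : ℝ) ^ (-(j : ℤ)) < δ := by
    have h1 : (p : ℝ) ^ (-(j : ℤ)) = ((p : ℝ)⁻¹) ^ j := by
      rw [zpow_neg, zpow_natCast, inv_pow]
    rw [h1]
    calc ((p : ℝ)⁻¹) ^ j ≤ ((p : ℝ)⁻¹) ^ j₀ := by
          apply pow_le_pow_of_le_one (by positivity) (by
            rw [inv_le_one_iff₀]; right; linarith) (by omega)
      _ < δ := hj₀
  haveI : NeZero (p ^ j) := ⟨pow_ne_zero _ (by omega)⟩
  set k : ℕ := ((n : ZMod (p ^ j))⁻¹).val with hk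
  have hco : n.Coprime (p ^ j) :=
    (((Nat.Prime.coprime_iff_not_dvd Fact.out).mpr hpn).symm).pow_right j
  have hmul : (n : ZMod (p ^ j)) * (k : ZMod (p ^ j)) = 1 := by
    rw [hk, ZMod.natCast_val, ZMod.cast_id]
    exact ZMod.coe_mul_inv_eq_one n hco
  have hdvd : ((p : ℤ) ^ j) ∣ ((n : ℤ) * k - 1) := by
    have h0 : (((n : ℤ) * k - 1 : ℤ) : ZMod (p ^ j)) = 0 := by
      push_cast
      rw [hmul, sub_self]
    have := (ZMod.intCast_zmod_eq_zero_iff_dvd _ (p ^ j)).mp h0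
    exact_mod_cast this
  have hk1 : 1 ≤ k := by
    rcases Nat.eq_zero_or_pos k with h0 | h; swap
    · exact h
    exfalso
    rw [h0] at hdvd
    simp only [Nat.cast_zero, mul_zero, zero_sub] at hdvd
    have h1 : ((p : ℤ) ^ j) ∣ 1 := (dvd_neg.mp hdvd)
    have := Int.le_of_dvd one_pos h1
    have h2 : (2 : ℤ) ≤ (p : ℤ) ^ j := by
      calc (2 : ℤ) ≤ (p : ℤ) := by exact_mod_cast hp2le
        _ ≤ (p : ℤ) ^ j := le_self_pow₀ (by omega) (by omega)
    omega
  -- Γ k close to Γ x₀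
  have hnk : ‖((n : ℚ_[p]) * k - 1)‖ ≤ (p : ℝ) ^ (-(j : ℤ)) := by
    have := (Padic.norm_int_le_pow_iff_dvd ((n : ℤ) * k - 1) j).mpr (by exact_mod_cast hdvd)
    push_cast at this
    exact this
  have hn0 : (n : ℚ_[p]) ≠ 0 := by
    intro hc; rw [hc, norm_zero] at hnnorm; norm_num at hnnorm
  have hkx : (k : ℚ_[p]) - x₀ = x₀ * ((n : ℚ_[p]) * k - 1) := by
    rw [hx₀]; field_simp
  have hdist : dist (k : ℚ_[p]) x₀ < δ := by
    rw [dist_eq_norm, hkx, norm_mul, hx₀norm, one_mul]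
    exact lt_of_le_of_lt hnk hjlt
  have hkmem : (k : ℚ_[p]) ∈ {y : ℚ_[p] | ‖y‖ ≤ 1} := by
    have := Padic.norm_int_le_one (k : ℤ) (p := p)
    push_cast at this
    exact this
  have hΓk : ‖Γ (k : ℚ_[p]) - Γ x₀‖ < (p : ℝ) ^ (-1 : ℤ) := by
    rw [← dist_eq_norm]
    exact hball hkmem hdist
  -- k ≡ p - m [MOD p]
  set N := p - m with hN
  have hN1 : 1 ≤ N := by omega
  have hdvd1 : (p : ℤ) ∣ ((n : ℤ) * k - 1) :=
    dvd_trans (dvd_pow_self (p : ℤ) (by omega)) hdvd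
  have hNZ : (N : ℤ) = (p : ℤ) - m := by rw [hN]; push_cast [Nat.cast_sub hmp.le]; ring
  have hmZ : (m : ℤ) * n = (p : ℤ) - 1 := by
    have h := hm
    zify [show 1 ≤ p by omega] at h
    linarith
  have hpkN : (p : ℤ) ∣ (n : ℤ) * ((k : ℤ) - N) := by
    have heq : (n : ℤ) * ((k : ℤ) - N) = ((n : ℤ) * k - 1) - (p : ℤ) * ((n : ℤ) - 1) := by
      rw [hNZ]; linear_combination hmZ
    rw [heq]
    exact dvd_sub hdvd1 (Dvd.intro _ rfl)
  have hprime : Prime (p : ℤ) := Int.prime_iff_natAbs_prime.mpr (by simpa using (Fact.out : p.Prime))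
  have hpk : (p : ℤ) ∣ ((k : ℤ) - N) :=
    (hprime.dvd_mul.mp hpkN).resolve_left (fun hc => hpn (Int.natCast_dvd_natCast.mp hc))
  have hkN : k ≡ N [MOD p] := by
    rw [Nat.modEq_iff_dvd]
    simpa using hpk.neg_right
  -- gamma congruence
  have hgcong : ((gammaPNat p k : ℤ) : ZMod p) = ((gammaPNat p N : ℤ) : ZMod p) := by
    rcases le_total k N with h | h
    · obtain ⟨t, ht⟩ := (Nat.modEq_iff_dvd' h).mp hkN
      have : N = k + t * p := by rw [Nat.mul_comm]; omega
      rw [this, gamma_mod_congr p hp2 t k hk1]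
    · obtain ⟨t, ht⟩ := (Nat.modEq_iff_dvd' h).mp hkN.symm
      have : k = N + t * p := by rw [Nat.mul_comm]; omega
      rw [this, gamma_mod_congr p hp2 t N hN1]
  have hg : ‖((gammaPNat p k : ℤ) : ℚ_[p]) - ((gammaPNat p N : ℤ) : ℚ_[p])‖
      ≤ (p : ℝ) ^ (-1 : ℤ) := by
    have h0 : (((gammaPNat p k - gammaPNat p N : ℤ)) : ZMod p) = 0 := by
      push_cast
      rw [hgcong, sub_self]
    have hd := (ZMod.intCast_zmod_eq_zero_iff_dvd _ p).mp h0
    have := (Padic.norm_int_le_pow_iff_dvd (gammaPNat p k - gammaPNat p N) 1).mpr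
      (by simpa using hd)
    push_cast at this ⊢
    simpa using this
  -- assemble
  have hΓkval : Γ (k : ℚ_[p]) = ((gammaPNat p k : ℤ) : ℚ_[p]) := hΓnat k
  have : Γ x₀ - ((gammaPNat p N : ℤ) : ℚ_[p])
      = (Γ x₀ - Γ (k : ℚ_[p])) + (((gammaPNat p k : ℤ) : ℚ_[p]) - ((gammaPNat p N : ℤ) : ℚ_[p])) := by
    rw [hΓkval]; ring
  rw [this]
  refine le_trans (Padic.nonarchimedean _ _) (max_le ?_ hg)
  rw [norm_sub_rev]
  exact le_of_lt hΓk
lemma pnorm_sum_le_one {p : ℕ} [Fact p.Prime] {ι : Type*} {s : Finset ι} {f : ι → ℚ_[p]}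
    (h : ∀ i ∈ s, ‖f i‖ ≤ 1) : ‖∑ i ∈ s, f i‖ ≤ 1 := by
  induction s using Finset.cons_induction with
  | empty => simp
  | cons a s ha ih =>
    rw [Finset.sum_cons]
    refine le_trans (Padic.nonarchimedean _ _) (max_le ?_ ?_)
    · exact h a (Finset.mem_cons_self a s)
    · exact ih fun i hi => h i (Finset.mem_cons_of_mem hi)

theorem factorial_ratio_padic_gamma (n p m : ℕ) [Fact p.Prime]
    (hn : 3 ≤ n) (hpn : p ≡ 1 [MOD n]) (hm : p - 1 = m * n)
    (Γ : ℚ_[p] → ℚ_[p])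
    (hΓcont : ContinuousOn Γ {y : ℚ_[p] | ‖y‖ ≤ 1})
    (hΓnat : ∀ k : ℕ, Γ (k : ℚ_[p]) = (gammaPNat p k : ℚ_[p])) :
    ‖(Nat.factorial (p - 1) : ℚ_[p]) / (Nat.factorial m : ℚ_[p]) ^ n -
        (-(Γ ((n : ℚ_[p])⁻¹) ^ n))‖ ≤ (p : ℝ) ^ (-1 : ℤ) := by
  have hp2le : 2 ≤ p := (Fact.out : p.Prime).two_le
  have hp2 : p ≠ 2 := by
    intro h
    subst h
    have h1 : m * n = 1 := by omega
    have : n ≤ 1 := Nat.le_of_dvd one_pos ⟨m, by rw [Nat.mul_comm]; omega⟩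
    omega
  have hp3 : 3 ≤ p := by
    rcases Nat.lt_or_ge p 3 with h | h
    · interval_cases p <;> simp_all
    · exact h
  have hm1 : 1 ≤ m := by
    rcases Nat.eq_zero_or_pos m with h | h
    · subst h; omega
    · exact h
  have hmp : m < p := by nlinarith [Nat.sub_add_cancel (show 1 ≤ p by omega)]
  have hpprime : p.Prime := Fact.out
  set g : ℤ := gammaPNat p (p - m) with hg
  set x₀ : ℚ_[p] := (n : ℚ_[p])⁻¹ with hx₀
  have ha : ‖Γ x₀ - (g : ℚ_[p])‖ ≤ (p : ℝ) ^ (-1 : ℤ) :=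
    gamma_approx n p m hp2 hn hm hm1 Γ hΓcont hΓnat
  have hple : (p : ℝ) ^ (-1 : ℤ) ≤ 1 := by
    apply zpow_le_one_of_nonpos₀
    · exact_mod_cast Nat.one_le_iff_ne_zero.mpr (by omega)
    · norm_num
  have hgnorm : ‖(g : ℚ_[p])‖ ≤ 1 := Padic.norm_int_le_one g
  have hΓnorm : ‖Γ x₀‖ ≤ 1 := by
    have : Γ x₀ = (Γ x₀ - (g : ℚ_[p])) + (g : ℚ_[p]) := by ring
    rw [this]
    exact le_trans (Padic.nonarchimedean _ _) (max_le (le_trans ha hple) hgnorm)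
  -- power difference
  have hpow : ‖Γ x₀ ^ n - (g : ℚ_[p]) ^ n‖ ≤ (p : ℝ) ^ (-1 : ℤ) := by
    rw [← geom_sum₂_mul (Γ x₀) ((g : ℚ_[p])) n, norm_mul]
    have hs : ‖∑ i ∈ range n, Γ x₀ ^ i * (g : ℚ_[p]) ^ (n - 1 - i)‖ ≤ 1 := by
      apply pnorm_sum_le_one
      intro i _
      rw [norm_mul, norm_pow, norm_pow]
      exact mul_le_one₀ (pow_le_one₀ (norm_nonneg _) hΓnorm) (by positivity)
        (pow_le_one₀ (norm_nonneg _) hgnorm)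
    calc ‖∑ i ∈ range n, Γ x₀ ^ i * (g : ℚ_[p]) ^ (n - 1 - i)‖ * ‖Γ x₀ - (g : ℚ_[p])‖
        ≤ 1 * ((p : ℝ) ^ (-1 : ℤ)) := by
          apply mul_le_mul hs ha (norm_nonneg _) zero_le_one
      _ = (p : ℝ) ^ (-1 : ℤ) := one_mul _
  -- main integer congruence
  have hMnorm : ‖((m.factorial : ℕ) : ℚ_[p])‖ = 1 := by
    have h1 : ‖((m.factorial : ℤ) : ℚ_[p])‖ ≤ 1 := Padic.norm_int_le_one _
    have h2 : ¬ ‖((m.factorial : ℤ) : ℚ_[p])‖ < 1 := by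
      rw [Padic.norm_intCast_lt_one_iff]
      intro hc
      have : p ∣ m.factorial := by exact_mod_cast hc
      have := (Nat.Prime.dvd_factorial hpprime).mp this
      omega
    push_cast at h1 h2 ⊢
    linarith
  have hM0 : ((m.factorial : ℕ) : ℚ_[p]) ≠ 0 := by
    intro hc
    rw [hc, norm_zero] at hMnorm
    norm_num at hMnorm
  have hkey : ‖((((p - 1).factorial : ℤ) + g ^ n * (m.factorial : ℤ) ^ n : ℤ) : ℚ_[p])‖
      ≤ (p : ℝ) ^ (-1 : ℤ) := by
    have hd := (ZMod.intCast_zmod_eq_zero_iff_dvd _ p).mp (key_zmod p n m hp2 hn hm hm1)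
    have := (Padic.norm_int_le_pow_iff_dvd
      (((p - 1).factorial : ℤ) + g ^ n * (m.factorial : ℤ) ^ n) 1).mpr (by simpa using hd)
    simpa using this
  have h3 : ‖((p - 1).factorial : ℚ_[p]) / ((m.factorial : ℚ_[p])) ^ n + (g : ℚ_[p]) ^ n‖
      ≤ (p : ℝ) ^ (-1 : ℤ) := by
    have heq : ((p - 1).factorial : ℚ_[p]) / ((m.factorial : ℚ_[p])) ^ n + (g : ℚ_[p]) ^ n
        = ((((p - 1).factorial : ℤ) + g ^ n * (m.factorial : ℤ) ^ n : ℤ) : ℚ_[p])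
          / ((m.factorial : ℚ_[p])) ^ n := by
      field_simp
      push_cast; ring
    rw [heq, norm_div, norm_pow]
    rw [show ‖(m.factorial : ℚ_[p])‖ = 1 from hMnorm]
    simpa using hkey
  have hsplit : (Nat.factorial (p - 1) : ℚ_[p]) / (Nat.factorial m : ℚ_[p]) ^ n -
        (-(Γ x₀ ^ n))
      = (((p - 1).factorial : ℚ_[p]) / ((m.factorial : ℚ_[p])) ^ n + (g : ℚ_[p]) ^ n)
        + (Γ x₀ ^ n - (g : ℚ_[p]) ^ n) := by ring
  rw [hsplit]
  exact le_trans (Padic.nonarchimedean _ _) (max_le h3 hpow)
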